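/- If a graph G on n vertices can be partitioned into n/λ pairwise disjoint λ-subgraphs (connected induced subgraphs of size λ covering all vertices), then p*(G) = λ/n, i.e., G is defense-optimal. -/

import Mathlib

open Finset

variable {V : Type*}

/-- A λ-subgraph: a set of `lam` vertices inducing a connected subgraph of `G`. -/
def IsLamSub (G : SimpleGraph V) (lam : ℕ) (s : Finset V) : Prop :=
  s.card = lam ∧ (G.induce (s : Set V)).Connected

/-- A defense strategy: a probability distribution over λ-subgraphs of `G`. -/
def IsDefStrat [Fintype V] [DecidableEq V] (G : SimpleGraph V) (lam : ℕ)
    (q : Finset V → ℝ) : Prop :=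
  (∀ s, 0 ≤ q s) ∧ (∀ s, q s ≠ 0 → IsLamSub G lam s) ∧ ∑ s : Finset V, q s = 1

/-- The probability that vertex `i` is covered under strategy `q`. -/
def vertexProb [Fintype V] [DecidableEq V] (q : Finset V → ℝ) (i : V) : ℝ :=
  ∑ s : Finset V, if i ∈ s then q s else 0

/-- The MaxMin probability `p*(G)`: maximum over defense strategies of the
minimum vertex probability. -/
noncomputable def pstar [Fintype V] [DecidableEq V] (G : SimpleGraph V) (lam : ℕ) : ℝ :=
  sSup {x : ℝ | ∃ q, IsDefStrat G lam q ∧ x = ⨅ i, vertexProb q i}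

theorem stmt5 [Fintype V] [DecidableEq V] [Nonempty V] (G : SimpleGraph V) (lam : ℕ)
    (h1 : 1 ≤ lam) (P : Finset (Finset V))
    (hP1 : ∀ s ∈ P, IsLamSub G lam s)
    (hP2 : (P : Set (Finset V)).PairwiseDisjoint id)
    (hP3 : P.sup id = Finset.univ)
    (hcard : P.card * lam = Fintype.card V) :
    pstar G lam = (lam : ℝ) / Fintype.card V ∧
      ∃ q, IsDefStrat G lam q ∧
        ∀ i, vertexProb q i = (lam : ℝ) / Fintype.card V := by
  classical
  have hn0 : 0 < Fintype.card V := Fintype.card_pos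
  have hm0 : 0 < P.card := by
    rcases Nat.eq_zero_or_pos P.card with h | h
    · rw [h, zero_mul] at hcard; omega
    · exact h
  have hlam0 : (0:ℝ) < lam := by exact_mod_cast h1
  have hmR : (0:ℝ) < P.card := by exact_mod_cast hm0
  have hnR : (0:ℝ) < Fintype.card V := by exact_mod_cast hn0
  have hval : (lam : ℝ) / Fintype.card V = (P.card : ℝ)⁻¹ := by
    have : (Fintype.card V : ℝ) = P.card * lam := by exact_mod_cast hcard.symm
    rw [this]
    field_simp
  -- the uniform strategy over P
  set q0 : Finset V → ℝ := fun s => if s ∈ P then (P.card : ℝ)⁻¹ else 0 with hq0def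
  have hq0strat : IsDefStrat G lam q0 := by
    refine ⟨fun s => ?_, fun s hs => ?_, ?_⟩
    · simp only [hq0def]; split <;> positivity
    · simp only [hq0def] at hs
      split at hs
      · exact hP1 _ ‹s ∈ P›
      · exact absurd rfl hs
    · simp only [hq0def]
      rw [Finset.sum_ite_mem, Finset.univ_inter, Finset.sum_const, nsmul_eq_mul]
      field_simp
  -- each vertex lies in exactly one member of P
  have hmem : ∀ i : V, ∃ s ∈ P, i ∈ s := by
    intro i
    have : i ∈ P.sup id := hP3 ▸ mem_univ i
    simpa [Finset.mem_sup] using this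
  have huniq : ∀ i : V, ∀ s ∈ P, ∀ t ∈ P, i ∈ s → i ∈ t → s = t := by
    intro i s hs t ht his hit
    by_contra hne
    exact (Finset.disjoint_left.mp (hP2 hs ht hne) his) hit
  have hvp : ∀ i : V, vertexProb q0 i = (lam : ℝ) / Fintype.card V := by
    intro i
    obtain ⟨s0, hs0P, hs0i⟩ := hmem i
    rw [hval]
    unfold vertexProb
    have hsplit : ∀ s : Finset V,
        (if i ∈ s then q0 s else 0) = if s ∈ P.filter (fun t => i ∈ t) then (P.card : ℝ)⁻¹ else 0 := by
      intro s
      simp only [hq0def, Finset.mem_filter]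
      by_cases h1 : i ∈ s <;> by_cases h2 : s ∈ P <;> simp [h1, h2]
    rw [Finset.sum_congr rfl fun s _ => hsplit s]
    rw [Finset.sum_ite_mem, Finset.univ_inter]
    have hfilter : P.filter (fun t => i ∈ t) = {s0} := by
      apply Finset.eq_singleton_iff_unique_mem.mpr
      constructor
      · exact Finset.mem_filter.mpr ⟨hs0P, hs0i⟩
      · intro t ht
        obtain ⟨htP, hti⟩ := Finset.mem_filter.mp ht
        exact huniq i t htP s0 hs0P hti hs0i
    rw [hfilter, Finset.sum_singleton]
  -- upper bound: any strategy has min ≤ λ/n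
  have hub : ∀ x ∈ {x : ℝ | ∃ q, IsDefStrat G lam q ∧ x = ⨅ i, vertexProb q i},
      x ≤ (lam : ℝ) / Fintype.card V := by
    rintro x ⟨q, ⟨hq0', hqsub, hqsum⟩, rfl⟩
    have hsum : ∑ i : V, vertexProb q i = (lam : ℝ) := by
      unfold vertexProb
      rw [Finset.sum_comm]
      have step : ∀ s : Finset V, ∑ i : V, (if i ∈ s then q s else 0) = (lam : ℝ) * q s := by
        intro s
        rw [Finset.sum_ite_mem, Finset.univ_inter, Finset.sum_const, nsmul_eq_mul]
        rcases eq_or_ne (q s) 0 with h | h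
        · rw [h, mul_zero, mul_zero]
        · rw [(hqsub s h).1]
      rw [Finset.sum_congr rfl fun s _ => step s, ← Finset.mul_sum, hqsum, mul_one]
    have hbdd : BddBelow (Set.range fun i => vertexProb q i) :=
      (Set.finite_range _).bddBelow
    have hle : ∀ i, (⨅ j, vertexProb q j) ≤ vertexProb q i := fun i => ciInf_le hbdd i
    have hkey : (Fintype.card V : ℝ) * (⨅ j, vertexProb q j) ≤ (lam : ℝ) := by
      calc (Fintype.card V : ℝ) * (⨅ j, vertexProb q j)
          = ∑ _i : V, (⨅ j, vertexProb q j) := by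
            rw [Finset.sum_const, Finset.card_univ, nsmul_eq_mul]
        _ ≤ ∑ i : V, vertexProb q i := Finset.sum_le_sum fun i _ => hle i
        _ = (lam : ℝ) := hsum
    rw [le_div_iff₀ hnR]
    linarith
  have hmemS : (lam : ℝ) / Fintype.card V ∈
      {x : ℝ | ∃ q, IsDefStrat G lam q ∧ x = ⨅ i, vertexProb q i} := by
    refine ⟨q0, hq0strat, ?_⟩
    have : (fun i => vertexProb q0 i) = fun _ => (lam : ℝ) / Fintype.card V :=
      funext hvp
    rw [this, ciInf_const]
  refine ⟨?_, ⟨q0, hq0strat, hvp⟩⟩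
  apply le_antisymm
  · exact Real.sSup_le hub (by positivity)
  · exact le_csSup ⟨_, hub⟩ hmemS
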